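/- Correspondence for I_◇□: a CK-frame (X, e, ≤, R) validates every instance of the axiom I_◇□: (◇φ → □ψ) → □(φ → ψ) if and only if it satisfies (Idb-corr): for all x, y, z with xRy, y ≤ z, and z ≠ e, there exist u, w such that x ≤ u, uRw, w ≤ z, and for every s with u ≤ s, either sRe or there exists t with sRt and z ≤ t. -/

import Mathlib

/-- Formulas of the modal language L. -/
inductive Form : Type
  | var : ℕ → Form
  | bot : Form
  | and : Form → Form → Form
  | or : Form → Form → Form
  | imp : Form → Form → Form
  | box : Form → Form
  | dia : Form → Form

namespace Form

/-- Negation abbreviation: ¬φ := φ → ⊥. -/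
def neg (φ : Form) : Form := φ.imp bot

/-- Uniform substitution. -/
def subst (σ : ℕ → Form) : Form → Form
  | var p => σ p
  | bot => bot
  | and a b => and (a.subst σ) (b.subst σ)
  | or a b => or (a.subst σ) (b.subst σ)
  | imp a b => imp (a.subst σ) (b.subst σ)
  | box a => box (a.subst σ)
  | dia a => dia (a.subst σ)

end Form

/-- Substitution instances of the axioms of a standard Hilbert axiomatisation
of intuitionistic propositional logic (the axioms are schematic, so all
substitution instances are included). -/
inductive IPLAx : Form → Prop
  | a1 (φ ψ : Form) : IPLAx (φ.imp (ψ.imp φ))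
  | a2 (φ ψ χ : Form) : IPLAx ((φ.imp (ψ.imp χ)).imp ((φ.imp ψ).imp (φ.imp χ)))
  | a3 (φ ψ : Form) : IPLAx ((φ.and ψ).imp φ)
  | a4 (φ ψ : Form) : IPLAx ((φ.and ψ).imp ψ)
  | a5 (φ ψ : Form) : IPLAx (φ.imp (ψ.imp (φ.and ψ)))
  | a6 (φ ψ : Form) : IPLAx (φ.imp (φ.or ψ))
  | a7 (φ ψ : Form) : IPLAx (ψ.imp (φ.or ψ))
  | a8 (φ ψ χ : Form) : IPLAx ((φ.imp χ).imp ((ψ.imp χ).imp ((φ.or ψ).imp χ)))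
  | a9 (φ : Form) : IPLAx (Form.bot.imp φ)

/-- Substitution instances of K_□ : □(φ→ψ) → (□φ → □ψ). -/
def KBoxAx (χ : Form) : Prop :=
  ∃ φ ψ : Form, χ = ((φ.imp ψ).box).imp ((φ.box).imp (ψ.box))

/-- Substitution instances of K_◇ : □(φ→ψ) → (◇φ → ◇ψ). -/
def KDiaAx (χ : Form) : Prop :=
  ∃ φ ψ : Form, χ = ((φ.imp ψ).box).imp ((φ.dia).imp (ψ.dia))

/-- Axiom instances available in the calculus CK ⊕ Ax : instances of IPL
axioms, of K_□, of K_◇, or substitution instances of members of Ax. -/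
def AxInst (Ax : Set Form) (φ : Form) : Prop :=
  IPLAx φ ∨ KBoxAx φ ∨ KDiaAx φ ∨ ∃ ψ ∈ Ax, ∃ σ : ℕ → Form, φ = ψ.subst σ

/-- The generalised Hilbert calculus CK ⊕ Ax deriving consecutions Γ ⊢_Ax φ:
rules (Ax), (MP), (Nec) and (El). -/
inductive Prv (Ax : Set Form) : Set Form → Form → Prop
  | ax {Γ : Set Form} {φ : Form} : AxInst Ax φ → Prv Ax Γ φ
  | mp {Γ : Set Form} {φ ψ : Form} : Prv Ax Γ φ → Prv Ax Γ (φ.imp ψ) → Prv Ax Γ ψ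
  | nec {Γ : Set Form} {φ : Form} : Prv Ax ∅ φ → Prv Ax Γ φ.box
  | el {Γ : Set Form} {φ : Form} : φ ∈ Γ → Prv Ax Γ φ

/-- A CK-frame (X, e, ≤, R): ≤ is a preorder, e is ≤-maximal (an "exploding"
world), and e R x iff x = e. -/
structure CKFrame where
  W : Type
  le : W → W → Prop
  R : W → W → Prop
  e : W
  le_refl : ∀ x : W, le x x
  le_trans : ∀ {x y z : W}, le x y → le y z → le x z
  e_max : ∀ {x : W}, le e x → x = e
  e_R : ∀ x : W, R e x ↔ x = e

/-- A valuation on a CK-frame: each variable gets a ≤-upset containing e. -/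
structure Val (F : CKFrame) where
  V : ℕ → F.W → Prop
  mono : ∀ (p : ℕ) {x y : F.W}, F.le x y → V p x → V p y
  at_e : ∀ p : ℕ, V p F.e

/-- The forcing relation M, x ⊩ φ of a CK-model (F, V). -/
def Forces (F : CKFrame) (V : Val F) : Form → F.W → Prop
  | .var p, x => V.V p x
  | .bot, x => x = F.e
  | .and a b, x => Forces F V a x ∧ Forces F V b x
  | .or a b, x => Forces F V a x ∨ Forces F V b x
  | .imp a b, x => ∀ y : F.W, F.le x y → Forces F V a y → Forces F V b y
  | .box a, x => ∀ y z : F.W, F.le x y → F.R y z → Forces F V a z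
  | .dia a, x => ∀ y : F.W, F.le x y → ∃ z : F.W, F.R y z ∧ Forces F V a z

/-- A frame validates the consecution Γ ⊢ φ if in every model on it, every
world forcing all of Γ forces φ. -/
def ValidConseq (F : CKFrame) (Γ : Set Form) (φ : Form) : Prop :=
  ∀ (V : Val F) (x : F.W), (∀ ψ ∈ Γ, Forces F V ψ x) → Forces F V φ x

/-- A frame validates a formula φ if every world in every model on it forces φ. -/
def ValidForm (F : CKFrame) (φ : Form) : Prop :=
  ∀ (V : Val F) (x : F.W), Forces F V φ x

/-- Γ semantically entails φ on a class 𝓕 of CK-frames. -/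
def SemEntails (𝓕 : Set CKFrame) (Γ : Set Form) (φ : Form) : Prop :=
  ∀ F ∈ 𝓕, ValidConseq F Γ φ

/-- (Idb-corr). -/
def IdbCorr (F : CKFrame) : Prop :=
  ∀ x y z : F.W, F.R x y → F.le y z → z ≠ F.e →
    ∃ u w : F.W, F.le x u ∧ F.R u w ∧ F.le w z ∧
      ∀ s : F.W, F.le u s → F.R s F.e ∨ ∃ t : F.W, F.R s t ∧ F.le z t

theorem forces_mono (F : CKFrame) (V : Val F) (φ : Form) :
    ∀ {x y : F.W}, F.le x y → Forces F V φ x → Forces F V φ y := by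
  induction φ with
  | var p => intro x y hxy h; exact V.mono p hxy h
  | bot => intro x y hxy h; subst h; exact F.e_max hxy
  | and a b iha ihb => intro x y hxy h; exact ⟨iha hxy h.1, ihb hxy h.2⟩
  | or a b iha ihb =>
      intro x y hxy h
      rcases h with h | h
      · exact Or.inl (iha hxy h)
      · exact Or.inr (ihb hxy h)
  | imp a b iha ihb =>
      intro x y hxy h z hyz ha
      exact h z (F.le_trans hxy hyz) ha
  | box a ih =>
      intro x y hxy h u z hyu huz
      exact h u z (F.le_trans hxy hyu) huz
  | dia a ih =>
      intro x y hxy h u hyu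
      exact h u (F.le_trans hxy hyu)

theorem forces_e (F : CKFrame) (V : Val F) (φ : Form) : Forces F V φ F.e := by
  induction φ with
  | var p => exact V.at_e p
  | bot => rfl
  | and a b iha ihb => exact ⟨iha, ihb⟩
  | or a b iha ihb => exact Or.inl iha
  | imp a b iha ihb =>
      intro y hy _
      rw [F.e_max hy]; exact ihb
  | box a ih =>
      intro y z hy hz
      have : y = F.e := F.e_max hy
      subst this
      rw [(F.e_R z).mp hz]; exact ih
  | dia a ih =>
      intro y hy
      have : y = F.e := F.e_max hy
      subst this
      exact ⟨F.e, (F.e_R F.e).mpr rfl, ih⟩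

/-- Correspondence for I_◇□: a CK-frame validates every instance of
(◇φ → □ψ) → □(φ → ψ) iff it satisfies (Idb-corr). -/
theorem idb_correspondence (F : CKFrame) :
    (∀ φ ψ : Form, ValidForm F (((φ.dia).imp (ψ.box)).imp ((φ.imp ψ).box))) ↔
      IdbCorr F := by
  constructor
  · -- validity → IdbCorr
    intro hval x y z hxy hyz hz
    -- valuations
    let Vp : ℕ → F.W → Prop := fun n v =>
      if n = 0 then (F.le z v ∨ v = F.e) else (v = F.e ∨ ¬ F.le v z)
    have mono : ∀ (p : ℕ) {a b : F.W}, F.le a b → Vp p a → Vp p b := by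
      intro p a b hab h
      by_cases hp : p = 0
      · simp only [Vp, hp, if_true] at h ⊢
        rcases h with h | h
        · exact Or.inl (F.le_trans h hab)
        · subst h; exact Or.inr (F.e_max hab)
      · simp only [Vp, hp, if_false] at h ⊢
        rcases h with h | h
        · subst h; exact Or.inl (F.e_max hab)
        · exact Or.inr (fun hbz => h (F.le_trans hab hbz))
    have at_e : ∀ p : ℕ, Vp p F.e := by
      intro p
      by_cases hp : p = 0
      · simp only [Vp, hp, if_true]; exact Or.inr trivial
      · simp only [Vp, hp, if_false]; exact Or.inl trivial
    let V : Val F := ⟨Vp, mono, at_e⟩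
    have hforce := hval (Form.var 0) (Form.var 1) V x
    -- x does not force ◇p → □q
    have hnot : ¬ Forces F V ((Form.var 0).dia.imp (Form.var 1).box) x := by
      intro h
      have hbox := hforce x (F.le_refl x) h
      have hpq := hbox x y (F.le_refl x) hxy
      have hq := hpq z hyz (Or.inl (F.le_refl z))
      rcases hq with hq | hq
      · exact hz hq
      · exact hq (F.le_refl z)
    simp only [Forces, not_forall] at hnot
    obtain ⟨u0, hxu0, hdia, u, w, hu0u, huw, hwq⟩ := hnot
    simp only [V, Vp, if_neg (by norm_num : (1:ℕ) ≠ 0)] at hwq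
    push_neg at hwq
    obtain ⟨hwe, hwz⟩ := hwq
    refine ⟨u, w, F.le_trans hxu0 hu0u, huw, hwz, ?_⟩
    intro s hus
    obtain ⟨t, hst, htp⟩ := hdia s (F.le_trans hu0u hus)
    simp only [V, Vp, if_pos rfl] at htp
    rcases htp with htp | htp
    · exact Or.inr ⟨t, hst, htp⟩
    · subst htp; exact Or.inl hst
  · -- IdbCorr → validity
    intro hc φ ψ V x
    intro y hxy hdia a b hya hab c hbc hφc
    by_cases hce : c = F.e
    · subst hce; exact forces_e F V ψ
    · obtain ⟨u, w, hau, huw, hwc, hcond⟩ := hc a b c hab hbc hce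
      have hudia : Forces F V φ.dia u := by
        intro s hus
        rcases hcond s hus with hse | ⟨t, hst, hct⟩
        · exact ⟨F.e, hse, forces_e F V φ⟩
        · exact ⟨t, hst, forces_mono F V φ hct hφc⟩
      have hubox : Forces F V ψ.box u :=
        hdia u (F.le_trans hya hau) hudia
      have hwψ : Forces F V ψ w := hubox u w (F.le_refl u) huw
      exact forces_mono F V ψ hwc hwψ
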